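/- Under the setup of the 3-block ADMM iterates with H = XᵀX + λI (λ > 0), nondecreasing penalties ρ_t, and constant C_F ≥ 1 bounding ‖H^{-1/2}‖₂, ‖H‖₂, ‖HW‖_F: for all t ≥ 1, ‖V^{(t+1)}‖_F ≤ (C_F + C_F⁴)(1 + ‖D^{(t)}‖_F + ‖V^{(t)}‖_F/ρ_{t-1} + ‖V^{(t-1)}‖_F/ρ_{t-1}), and ‖D^{(t+1)} − D^{(t)}‖_F ≤ (2C_F + 2C_F⁴)/ρ_t · (1 + ‖D^{(t)}‖_F + ‖V^{(t)}‖_F/ρ_{t-1} + ‖V^{(t-1)}‖_F/ρ_{t-1}). -/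

import Mathlib

open Matrix

noncomputable def frobNorm {n m : ℕ} (A : Matrix (Fin n) (Fin m) ℝ) : ℝ :=
  Real.sqrt (∑ i, ∑ j, (A i j) ^ 2)

/-- The spectral (ℓ₂ operator) norm of a square real matrix. -/
noncomputable def specNorm {n : ℕ} (A : Matrix (Fin n) (Fin n) ℝ) : ℝ :=
  ‖LinearMap.toContinuousLinearMap (Matrix.toEuclideanLin A)‖

namespace StmtHelpers

set_option synthInstance.maxHeartbeats 1000000
set_option maxHeartbeats 1000000

noncomputable def mvec {n m : ℕ} (A : Matrix (Fin n) (Fin m) ℝ) :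
    EuclideanSpace ℝ (Fin n × Fin m) :=
  (WithLp.equiv 2 _).symm (fun p => A p.1 p.2)

lemma frobNorm_eq {n m : ℕ} (A : Matrix (Fin n) (Fin m) ℝ) : frobNorm A = ‖mvec A‖ := by
  rw [EuclideanSpace.norm_eq, frobNorm]
  congr 1
  rw [Fintype.sum_prod_type]
  congr 1; ext i; congr 1; ext j
  simp [mvec, Real.norm_eq_abs, sq_abs]

lemma mvec_add {n m : ℕ} (A B : Matrix (Fin n) (Fin m) ℝ) :
    mvec (A + B) = mvec A + mvec B := rfl

lemma mvec_sub {n m : ℕ} (A B : Matrix (Fin n) (Fin m) ℝ) :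
    mvec (A - B) = mvec A - mvec B := rfl

lemma mvec_smul {n m : ℕ} (c : ℝ) (A : Matrix (Fin n) (Fin m) ℝ) :
    mvec (c • A) = c • mvec A := rfl

lemma frobNorm_nonneg {n m : ℕ} (A : Matrix (Fin n) (Fin m) ℝ) : 0 ≤ frobNorm A := by
  rw [frobNorm_eq]; exact norm_nonneg _

lemma frobNorm_add_le {n m : ℕ} (A B : Matrix (Fin n) (Fin m) ℝ) :
    frobNorm (A + B) ≤ frobNorm A + frobNorm B := by
  rw [frobNorm_eq, frobNorm_eq, frobNorm_eq, mvec_add]; exact norm_add_le _ _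

lemma frobNorm_sub_le {n m : ℕ} (A B : Matrix (Fin n) (Fin m) ℝ) :
    frobNorm (A - B) ≤ frobNorm A + frobNorm B := by
  rw [frobNorm_eq, frobNorm_eq, frobNorm_eq, mvec_sub]; exact norm_sub_le _ _

lemma frobNorm_smul {n m : ℕ} (c : ℝ) (A : Matrix (Fin n) (Fin m) ℝ) :
    frobNorm (c • A) = |c| * frobNorm A := by
  rw [frobNorm_eq, frobNorm_eq, mvec_smul, norm_smul, Real.norm_eq_abs]

def vnsq {n : ℕ} (v : Fin n → ℝ) : ℝ := ∑ i, v i ^ 2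

lemma vnsq_nonneg {n : ℕ} (v : Fin n → ℝ) : 0 ≤ vnsq v :=
  Finset.sum_nonneg fun i _ => sq_nonneg _

lemma norm_symm {n : ℕ} (v : Fin n → ℝ) :
    ‖(WithLp.equiv 2 (Fin n → ℝ)).symm v‖ = Real.sqrt (vnsq v) := by
  rw [EuclideanSpace.norm_eq]
  congr 1
  apply Finset.sum_congr rfl
  intro i _
  simp [Real.norm_eq_abs, sq_abs]

lemma spec_vnsq {n : ℕ} (M : Matrix (Fin n) (Fin n) ℝ) (c : ℝ) (h : specNorm M ≤ c)
    (v : Fin n → ℝ) : Real.sqrt (vnsq (M *ᵥ v)) ≤ c * Real.sqrt (vnsq v) := by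
  have h1 : ‖Matrix.toEuclideanLin M ((WithLp.equiv 2 (Fin n → ℝ)).symm v)‖ ≤
      specNorm M * ‖(WithLp.equiv 2 (Fin n → ℝ)).symm v‖ := by
    have := ContinuousLinearMap.le_opNorm
      (LinearMap.toContinuousLinearMap (Matrix.toEuclideanLin M))
      ((WithLp.equiv 2 (Fin n → ℝ)).symm v)
    simpa [specNorm] using this
  rw [show Matrix.toEuclideanLin M ((WithLp.equiv 2 (Fin n → ℝ)).symm v) = (WithLp.equiv 2 (Fin n → ℝ)).symm (M *ᵥ v) from rfl, norm_symm, norm_symm] at h1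
  calc Real.sqrt (vnsq (M *ᵥ v)) ≤ specNorm M * Real.sqrt (vnsq v) := h1
    _ ≤ c * Real.sqrt (vnsq v) := by
        apply mul_le_mul_of_nonneg_right h (Real.sqrt_nonneg _)

lemma frobNorm_mul_le {n m : ℕ} (M : Matrix (Fin n) (Fin n) ℝ)
    (B : Matrix (Fin n) (Fin m) ℝ) (c : ℝ) (hc : 0 ≤ c)
    (h : ∀ v : Fin n → ℝ, Real.sqrt (vnsq (M *ᵥ v)) ≤ c * Real.sqrt (vnsq v)) :
    frobNorm (M * B) ≤ c * frobNorm B := by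
  have h' : ∀ v : Fin n → ℝ, vnsq (M *ᵥ v) ≤ c ^ 2 * vnsq v := by
    intro v
    have := h v
    have h2 : Real.sqrt (vnsq (M *ᵥ v)) ^ 2 ≤ (c * Real.sqrt (vnsq v)) ^ 2 := by
      apply pow_le_pow_left₀ (Real.sqrt_nonneg _) this
    rwa [Real.sq_sqrt (vnsq_nonneg _), mul_pow, Real.sq_sqrt (vnsq_nonneg _)] at h2
  rw [frobNorm, frobNorm]
  rw [show (∑ i, ∑ j, ((M * B) i j) ^ 2) = ∑ j, ∑ i, ((M * B) i j) ^ 2 from Finset.sum_comm,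
    show (∑ i, ∑ j, (B i j) ^ 2) = ∑ j, ∑ i, (B i j) ^ 2 from Finset.sum_comm]
  have key : ∑ j, ∑ i, ((M * B) i j) ^ 2 ≤ c ^ 2 * ∑ j, ∑ i, (B i j) ^ 2 := by
    rw [Finset.mul_sum]
    apply Finset.sum_le_sum
    intro j _
    have := h' (fun i => B i j)
    simpa [vnsq, Matrix.mul_apply, Matrix.mulVec, dotProduct] using this
  calc Real.sqrt (∑ j, ∑ i, ((M * B) i j) ^ 2) ≤ Real.sqrt (c ^ 2 * ∑ j, ∑ i, (B i j) ^ 2) :=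
        Real.sqrt_le_sqrt key
    _ = c * Real.sqrt (∑ j, ∑ i, (B i j) ^ 2) := by
        rw [Real.sqrt_mul (sq_nonneg c), Real.sqrt_sq hc]

lemma vnsq_eq_dot {n : ℕ} (v : Fin n → ℝ) : vnsq v = v ⬝ᵥ v := by
  simp [vnsq, dotProduct, pow_two]

lemma dot_le_sqrt {n : ℕ} (x y : Fin n → ℝ) :
    x ⬝ᵥ y ≤ Real.sqrt (vnsq x) * Real.sqrt (vnsq y) := by
  have h : (inner (𝕜 := ℝ) ((WithLp.equiv 2 (Fin n → ℝ)).symm x)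
        ((WithLp.equiv 2 (Fin n → ℝ)).symm y))
      ≤ ‖(WithLp.equiv 2 (Fin n → ℝ)).symm x‖ * ‖(WithLp.equiv 2 (Fin n → ℝ)).symm y‖ :=
    real_inner_le_norm _ _
  rw [norm_symm, norm_symm] at h
  have h2 : (inner (𝕜 := ℝ) ((WithLp.equiv 2 (Fin n → ℝ)).symm x)
      ((WithLp.equiv 2 (Fin n → ℝ)).symm y)) = x ⬝ᵥ y := by
    simp [PiLp.inner_apply, dotProduct, RCLike.inner_apply, mul_comm]
  rwa [h2] at h

lemma vnsq_eq_zero {n : ℕ} {v : Fin n → ℝ} (h : vnsq v = 0) : v = 0 := by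
  funext i
  have := (Finset.sum_eq_zero_iff_of_nonneg (fun i _ => sq_nonneg (v i))).1 h i (Finset.mem_univ i)
  exact pow_eq_zero_iff (n := 2) (by norm_num) |>.1 this

lemma sqrt_vnsq_smul {n : ℕ} (c : ℝ) (v : Fin n → ℝ) :
    Real.sqrt (vnsq (c • v)) = |c| * Real.sqrt (vnsq v) := by
  have : vnsq (c • v) = c ^ 2 * vnsq v := by
    simp [vnsq, Finset.mul_sum, mul_pow]
  rw [this, Real.sqrt_mul (sq_nonneg c), Real.sqrt_sq_eq_abs]

lemma coercive {N n : ℕ} (X : Matrix (Fin N) (Fin n) ℝ) (l ρv : ℝ) (hl : 0 < l) (hρ : 0 < ρv)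
    (x : Fin n → ℝ) :
    ρv * Real.sqrt (vnsq x) ≤
      Real.sqrt (vnsq ((Xᵀ * X + l • (1 : Matrix (Fin n) (Fin n) ℝ)
        + ρv • (1 : Matrix (Fin n) (Fin n) ℝ)) *ᵥ x)) := by
  set P := Xᵀ * X + l • (1 : Matrix (Fin n) (Fin n) ℝ) + ρv • (1 : Matrix (Fin n) (Fin n) ℝ)
  have hdot : ρv * vnsq x ≤ x ⬝ᵥ (P *ᵥ x) := by
    have hexp : x ⬝ᵥ (P *ᵥ x) = (X *ᵥ x) ⬝ᵥ (X *ᵥ x) + l * (x ⬝ᵥ x) + ρv * (x ⬝ᵥ x) := by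
      simp only [P, Matrix.add_mulVec, Matrix.smul_mulVec, Matrix.one_mulVec,
        dotProduct_add, dotProduct_smul, smul_eq_mul, ← Matrix.mulVec_mulVec]
      rw [Matrix.dotProduct_mulVec x Xᵀ, Matrix.vecMul_transpose]
    rw [hexp, ← vnsq_eq_dot (X *ᵥ x), ← vnsq_eq_dot x]
    have h2 : 0 ≤ vnsq (X *ᵥ x) := vnsq_nonneg _
    have h4 : 0 ≤ l * vnsq x := mul_nonneg hl.le (vnsq_nonneg x)
    linarith
  have hcs : x ⬝ᵥ (P *ᵥ x) ≤ Real.sqrt (vnsq x) * Real.sqrt (vnsq (P *ᵥ x)) := dot_le_sqrt _ _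
  rcases eq_or_lt_of_le (Real.sqrt_nonneg (vnsq x)) with h0 | h0
  · rw [← h0, mul_zero]; exact Real.sqrt_nonneg _
  · have hx : vnsq x = Real.sqrt (vnsq x) * Real.sqrt (vnsq x) :=
      (Real.mul_self_sqrt (vnsq_nonneg x)).symm
    rw [hx] at hdot
    have h3 := le_trans hdot hcs
    exact le_of_mul_le_mul_right (by nlinarith [h3]) h0

lemma det_isUnit_of_coercive {n : ℕ} (P : Matrix (Fin n) (Fin n) ℝ) (ρv : ℝ) (hρ : 0 < ρv)
    (hco : ∀ x, ρv * Real.sqrt (vnsq x) ≤ Real.sqrt (vnsq (P *ᵥ x))) :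
    IsUnit P.det := by
  rw [isUnit_iff_ne_zero]
  intro hdet
  obtain ⟨v, hv, hPv⟩ := (Matrix.exists_mulVec_eq_zero_iff).2 hdet
  have h := hco v
  rw [hPv] at h
  simp only [vnsq, Pi.zero_apply] at h
  simp only [ne_eq] at hv
  apply hv
  apply vnsq_eq_zero
  have h0 : Real.sqrt (vnsq v) ≤ 0 := by
    have : ρv * Real.sqrt (vnsq v) ≤ 0 := by simpa [vnsq] using h
    nlinarith [Real.sqrt_nonneg (vnsq v)]
  have h2 := Real.sqrt_eq_zero'.1 (le_antisymm h0 (Real.sqrt_nonneg _))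
  exact le_antisymm h2 (vnsq_nonneg v)

lemma inv_mulVec_bound {n : ℕ} (P : Matrix (Fin n) (Fin n) ℝ) (ρv : ℝ) (hρ : 0 < ρv)
    (hco : ∀ x, ρv * Real.sqrt (vnsq x) ≤ Real.sqrt (vnsq (P *ᵥ x)))
    (v : Fin n → ℝ) :
    Real.sqrt (vnsq (P⁻¹ *ᵥ v)) ≤ ρv⁻¹ * Real.sqrt (vnsq v) := by
  have hdet := det_isUnit_of_coercive P ρv hρ hco
  have hPP : P * P⁻¹ = 1 := Matrix.mul_nonsing_inv P hdet
  have h := hco (P⁻¹ *ᵥ v)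
  rw [Matrix.mulVec_mulVec, hPP, Matrix.one_mulVec] at h
  rw [← le_div_iff₀' hρ, div_eq_inv_mul] at h
  exact h

lemma proj_norm_le {n m r : ℕ}
    (Pr : Matrix (Fin n) (Fin m) ℝ → Matrix (Fin n) (Fin m) ℝ)
    (hPr : ∀ A : Matrix (Fin n) (Fin m) ℝ, (Pr A).rank ≤ r ∧
      ∀ M : Matrix (Fin n) (Fin m) ℝ, M.rank ≤ r →
        frobNorm (A - Pr A) ≤ frobNorm (A - M))
    (G : Matrix (Fin n) (Fin m) ℝ) : frobNorm (Pr G) ≤ frobNorm G := by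
  set u := mvec (G - Pr G) with hu
  set w := mvec (Pr G) with hw
  have hkey : ∀ ε : ℝ, ‖u‖ ≤ ‖u + ε • w‖ := by
    intro ε
    have hrank : ((1 - ε) • Pr G).rank ≤ r := by
      have : (1 - ε) • Pr G = ((1 - ε) • (1 : Matrix (Fin n) (Fin n) ℝ)) * Pr G := by
        rw [Matrix.smul_mul, Matrix.one_mul]
      rw [this]
      exact le_trans (Matrix.rank_mul_le_right _ _) (hPr G).1
    have h2 := (hPr G).2 _ hrank
    rw [frobNorm_eq, frobNorm_eq] at h2
    have h3 : mvec (G - (1 - ε) • Pr G) = u + ε • w := by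
      rw [hu, hw]
      show mvec _ = mvec (G - Pr G) + ε • mvec (Pr G)
      have : G - (1 - ε) • Pr G = (G - Pr G) + ε • Pr G := by
        rw [sub_smul, one_smul]; abel
      rw [this]; rfl
    rw [h3] at h2
    exact h2
  have hinner : (inner (𝕜 := ℝ) u w) = 0 := by
    set a := ‖w‖ ^ 2 with ha
    set b := (inner (𝕜 := ℝ) u w : ℝ) with hb
    have hq : ∀ ε : ℝ, 0 ≤ 2 * ε * b + ε ^ 2 * a := by
      intro ε
      have h := hkey ε
      have h2 : ‖u‖ ^ 2 ≤ ‖u + ε • w‖ ^ 2 := by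
        apply pow_le_pow_left₀ (norm_nonneg _) h
      rw [norm_add_sq_real, real_inner_smul_right, norm_smul] at h2
      simp only [Real.norm_eq_abs, mul_pow, sq_abs] at h2
      nlinarith [h2]
    have ha0 : 0 ≤ a := by positivity
    have hapos : 0 < a + 1 := by linarith
    have hne : a + 1 ≠ 0 := ne_of_gt hapos
    set c := -b / (a + 1) with hcdef
    have hc : c * (a + 1) = -b := by
      rw [hcdef]; field_simp
    have h1 := hq c
    have h4 : 0 ≤ (2 * c * b + c ^ 2 * a) * (a + 1) ^ 2 := mul_nonneg h1 (sq_nonneg _)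
    have h5 : (2 * c * b + c ^ 2 * a) * (a + 1) ^ 2
        = 2 * (c * (a + 1)) * b * (a + 1) + (c * (a + 1)) ^ 2 * a := by ring
    rw [h5, hc] at h4
    have hb2 : b ^ 2 ≤ 0 := by nlinarith [ha0]
    have hb0 : b ^ 2 = 0 := le_antisymm hb2 (sq_nonneg b)
    exact pow_eq_zero_iff (n := 2) (by norm_num) |>.1 hb0
  have hGuw : mvec G = u + w := by
    rw [hu, hw]
    show mvec G = mvec (G - Pr G) + mvec (Pr G)
    have : G = (G - Pr G) + Pr G := by abel
    conv_lhs => rw [this]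
    rfl
  have hpyth : ‖mvec G‖ ^ 2 = ‖u‖ ^ 2 + ‖w‖ ^ 2 := by
    rw [hGuw, norm_add_sq_real, hinner]; ring
  rw [frobNorm_eq, frobNorm_eq, ← hw]
  nlinarith [norm_nonneg w, norm_nonneg (mvec G), sq_nonneg (‖u‖)]

end StmtHelpers

open StmtHelpers in
set_option maxHeartbeats 2000000 in
theorem stmt12 (N n m r : ℕ) (X : Matrix (Fin N) (Fin n) ℝ)
    (W : Matrix (Fin n) (Fin m) ℝ) (l : ℝ) (hl : 0 < l)
    (H R : Matrix (Fin n) (Fin n) ℝ)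
    (hHdef : H = Xᵀ * X + l • (1 : Matrix (Fin n) (Fin n) ℝ))
    (hR : R.PosDef) (hRR : R * R = H)
    (ρ : ℕ → ℝ) (hρpos : ∀ t, 0 < ρ t) (hρmono : Monotone ρ)
    -- `Pr` is the Frobenius-optimal rank-`r` projection
    (Pr : Matrix (Fin n) (Fin m) ℝ → Matrix (Fin n) (Fin m) ℝ)
    (hPr : ∀ A : Matrix (Fin n) (Fin m) ℝ, (Pr A).rank ≤ r ∧
      ∀ M : Matrix (Fin n) (Fin m) ℝ, M.rank ≤ r →
        frobNorm (A - Pr A) ≤ frobNorm (A - M))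
    -- `PS` is the (magnitude-based) Frobenius projection onto the sparsity set `𝒮`
    (𝒮 : Set (Matrix (Fin n) (Fin m) ℝ))
    (PS : Matrix (Fin n) (Fin m) ℝ → Matrix (Fin n) (Fin m) ℝ)
    (hPS : ∀ A : Matrix (Fin n) (Fin m) ℝ, PS A ∈ 𝒮 ∧
      ∀ D ∈ 𝒮, frobNorm (A - PS A) ≤ frobNorm (A - D))
    -- the 3-block ADMM iterates
    (S L D V : ℕ → Matrix (Fin n) (Fin m) ℝ)
    (hS : ∀ t, S (t + 1) =
      (H + ρ t • (1 : Matrix (Fin n) (Fin n) ℝ))⁻¹ * (H * (W - L t) - V t + ρ t • D t))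
    (hL : ∀ t, L (t + 1) = R⁻¹ * Pr (R * (W - S (t + 1))))
    (hD : ∀ t, D (t + 1) = PS (S (t + 1) + (ρ t)⁻¹ • V t))
    (hV : ∀ t, V (t + 1) = V t + ρ t • (S (t + 1) - D (t + 1)))
    (CF : ℝ) (hCF : 1 ≤ CF)
    (hCF1 : specNorm R⁻¹ ≤ CF) (hCF2 : specNorm H ≤ CF) (hCF3 : frobNorm (H * W) ≤ CF) :
    ∀ t ≥ 1,
      frobNorm (V (t + 1)) ≤
        (CF + CF ^ 4) * (1 + frobNorm (D t) + frobNorm (V t) / ρ (t - 1) +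
          frobNorm (V (t - 1)) / ρ (t - 1)) ∧
      frobNorm (D (t + 1) - D t) ≤
        (2 * CF + 2 * CF ^ 4) / ρ t * (1 + frobNorm (D t) + frobNorm (V t) / ρ (t - 1) +
          frobNorm (V (t - 1)) / ρ (t - 1)) := by
  intro t ht
  obtain ⟨k, rfl⟩ : ∃ k, t = k + 1 := ⟨t - 1, (Nat.succ_pred_eq_of_pos ht).symm⟩
  simp only [Nat.add_sub_cancel]
  set ρ1 := ρ (k + 1) with hρ1
  set ρ0 := ρ k with hρ0
  have hρ1pos : 0 < ρ1 := hρpos _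
  have hρ0pos : 0 < ρ0 := hρpos _
  have hρ01 : ρ0 ≤ ρ1 := hρmono (Nat.le_succ k)
  have hρ1ne : ρ1 ≠ 0 := ne_of_gt hρ1pos
  have hρ0ne : ρ0 ≠ 0 := ne_of_gt hρ0pos
  have hCF0 : 0 ≤ CF := le_trans zero_le_one hCF
  -- the matrix P and its coercivity
  set P := H + ρ1 • (1 : Matrix (Fin n) (Fin n) ℝ) with hP
  have hco : ∀ x : Fin n → ℝ,
      ρ1 * Real.sqrt (vnsq x) ≤ Real.sqrt (vnsq (P *ᵥ x)) := by
    intro x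
    have := coercive X l ρ1 hl hρ1pos x
    rw [hP, hHdef]
    exact this
  have hPdet : IsUnit P.det := det_isUnit_of_coercive P ρ1 hρ1pos hco
  have hPinvP : P⁻¹ * P = 1 := Matrix.nonsing_inv_mul P hPdet
  -- R facts
  have hRdet : IsUnit R.det := hR.det_pos.ne'.isUnit
  have hRRinv : R * R⁻¹ = 1 := Matrix.mul_nonsing_inv R hRdet
  have hRinvR : R⁻¹ * R = 1 := Matrix.nonsing_inv_mul R hRdet
  have hHRinv : H * R⁻¹ = R := by
    rw [← hRR, Matrix.mul_assoc, hRRinv, Matrix.mul_one]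
  have hRinvH : R⁻¹ * H = R := by
    rw [← hRR, ← Matrix.mul_assoc, hRinvR, Matrix.one_mul]
  -- norm transfer lemmas
  have hHmul : ∀ B : Matrix (Fin n) (Fin m) ℝ, frobNorm (H * B) ≤ CF * frobNorm B :=
    fun B => frobNorm_mul_le H B CF hCF0 (spec_vnsq H CF hCF2)
  have hRimul : ∀ B : Matrix (Fin n) (Fin m) ℝ, frobNorm (R⁻¹ * B) ≤ CF * frobNorm B :=
    fun B => frobNorm_mul_le R⁻¹ B CF hCF0 (spec_vnsq R⁻¹ CF hCF1)
  have hQmul : ∀ B : Matrix (Fin n) (Fin m) ℝ,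
      frobNorm ((ρ1 • P⁻¹) * B) ≤ 1 * frobNorm B := by
    intro B
    apply frobNorm_mul_le _ _ _ zero_le_one
    intro v
    rw [Matrix.smul_mulVec, sqrt_vnsq_smul, abs_of_pos hρ1pos, one_mul]
    have := inv_mulVec_bound P ρ1 hρ1pos hco v
    calc ρ1 * Real.sqrt (vnsq (P⁻¹ *ᵥ v)) ≤ ρ1 * (ρ1⁻¹ * Real.sqrt (vnsq v)) := by
          apply mul_le_mul_of_nonneg_left this hρ1pos.le
      _ = Real.sqrt (vnsq v) := by field_simp
  -- abbreviations
  set G := R * (W - S (k + 1)) with hG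
  set A := S (k + 2) + ρ1⁻¹ • V (k + 1) with hA
  set Z := H * W - H * D (k + 1) - R * Pr G + ρ1⁻¹ • (H * V (k + 1)) with hZdef
  -- the key identity
  have hAD : A - D (k + 1) = P⁻¹ * Z := by
    have hSk2 : S (k + 2) = P⁻¹ * (H * (W - L (k + 1)) - V (k + 1) + ρ1 • D (k + 1)) := by
      rw [hS (k + 1)]
    have hLk1 : L (k + 1) = R⁻¹ * Pr G := by rw [hL k, hG]
    have hZeq : Z = (H * (W - L (k + 1)) - V (k + 1) + ρ1 • D (k + 1))
        + P * (ρ1⁻¹ • V (k + 1)) - P * D (k + 1) := by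
      rw [hZdef, hLk1, hP]
      simp only [Matrix.mul_sub, Matrix.mul_add, Matrix.add_mul, Matrix.smul_mul,
        Matrix.mul_smul, Matrix.one_mul, smul_add, smul_smul, mul_inv_cancel₀ hρ1ne,
        inv_mul_cancel₀ hρ1ne, one_smul, ← Matrix.mul_assoc, hHRinv]
      abel
    rw [hZeq, Matrix.mul_sub, Matrix.mul_add, ← Matrix.mul_assoc, ← Matrix.mul_assoc,
      hPinvP, Matrix.one_mul, Matrix.one_mul, hA, hSk2]
  -- norm of Z
  have hPrG : frobNorm (Pr G) ≤ frobNorm G := proj_norm_le Pr hPr G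
  have hGbound : frobNorm G ≤ CF ^ 2 * (1 + frobNorm (S (k + 1))) := by
    have h1 : G = R⁻¹ * (H * (W - S (k + 1))) := by
      rw [← Matrix.mul_assoc, hRinvH]
    have h2 : frobNorm G ≤ CF * frobNorm (H * (W - S (k + 1))) := by
      rw [h1]; exact hRimul _
    have h3 : H * (W - S (k + 1)) = H * W - H * S (k + 1) := by rw [Matrix.mul_sub]
    have h4 : frobNorm (H * (W - S (k + 1))) ≤ CF + CF * frobNorm (S (k + 1)) := by
      rw [h3]
      calc frobNorm (H * W - H * S (k + 1)) ≤ frobNorm (H * W) + frobNorm (H * S (k + 1)) :=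
            frobNorm_sub_le _ _
        _ ≤ CF + CF * frobNorm (S (k + 1)) := add_le_add hCF3 (hHmul _)
    calc frobNorm G ≤ CF * (CF + CF * frobNorm (S (k + 1))) := by
          apply h2.trans
          exact mul_le_mul_of_nonneg_left h4 hCF0
      _ = CF ^ 2 * (1 + frobNorm (S (k + 1))) := by ring
  have hRPrG : frobNorm (R * Pr G) ≤ CF ^ 2 * frobNorm (Pr G) := by
    have h1 : R * Pr G = R⁻¹ * (H * Pr G) := by
      rw [← Matrix.mul_assoc, hRinvH]
    rw [h1]
    calc frobNorm (R⁻¹ * (H * Pr G)) ≤ CF * frobNorm (H * Pr G) := hRimul _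
      _ ≤ CF * (CF * frobNorm (Pr G)) := mul_le_mul_of_nonneg_left (hHmul _) hCF0
      _ = CF ^ 2 * frobNorm (Pr G) := by ring
  -- bound on S (k+1)
  have hSbound : frobNorm (S (k + 1)) ≤ frobNorm (D (k + 1))
      + ρ0⁻¹ * (frobNorm (V (k + 1)) + frobNorm (V k)) := by
    have h1 : S (k + 1) = D (k + 1) + ρ0⁻¹ • (V (k + 1) - V k) := by
      have h2 := hV k
      have : ρ0⁻¹ • (V (k + 1) - V k) = S (k + 1) - D (k + 1) := by
        rw [h2]
        rw [show V k + ρ0 • (S (k + 1) - D (k + 1)) - V k = ρ0 • (S (k + 1) - D (k + 1)) by abel]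
        rw [smul_smul, inv_mul_cancel₀ hρ0ne, one_smul]
      rw [this]; abel
    rw [h1]
    calc frobNorm (D (k + 1) + ρ0⁻¹ • (V (k + 1) - V k))
        ≤ frobNorm (D (k + 1)) + frobNorm (ρ0⁻¹ • (V (k + 1) - V k)) := frobNorm_add_le _ _
      _ ≤ frobNorm (D (k + 1)) + ρ0⁻¹ * (frobNorm (V (k + 1)) + frobNorm (V k)) := by
          rw [frobNorm_smul, abs_of_pos (inv_pos.2 hρ0pos)]
          exact add_le_add le_rfl (mul_le_mul_of_nonneg_left (frobNorm_sub_le _ _)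
            (inv_pos.2 hρ0pos).le)
  -- bound on Z
  have hZbound : frobNorm Z ≤ CF + CF * frobNorm (D (k + 1))
      + CF ^ 4 * (1 + frobNorm (S (k + 1))) + ρ1⁻¹ * (CF * frobNorm (V (k + 1))) := by
    have t1 : frobNorm Z ≤ frobNorm (H * W - H * D (k + 1) - R * Pr G)
        + frobNorm (ρ1⁻¹ • (H * V (k + 1))) := by
      rw [hZdef]; exact frobNorm_add_le _ _
    have t2 : frobNorm (H * W - H * D (k + 1) - R * Pr G)
        ≤ frobNorm (H * W - H * D (k + 1)) + frobNorm (R * Pr G) := frobNorm_sub_le _ _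
    have t3 : frobNorm (H * W - H * D (k + 1)) ≤ CF + CF * frobNorm (D (k + 1)) :=
      le_trans (frobNorm_sub_le _ _) (add_le_add hCF3 (hHmul _))
    have t4 : frobNorm (R * Pr G) ≤ CF ^ 4 * (1 + frobNorm (S (k + 1))) := by
      calc frobNorm (R * Pr G) ≤ CF ^ 2 * frobNorm (Pr G) := hRPrG
        _ ≤ CF ^ 2 * frobNorm G := mul_le_mul_of_nonneg_left hPrG (by positivity)
        _ ≤ CF ^ 2 * (CF ^ 2 * (1 + frobNorm (S (k + 1)))) :=
            mul_le_mul_of_nonneg_left hGbound (by positivity)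
        _ = CF ^ 4 * (1 + frobNorm (S (k + 1))) := by ring
    have t5 : frobNorm (ρ1⁻¹ • (H * V (k + 1))) ≤ ρ1⁻¹ * (CF * frobNorm (V (k + 1))) := by
      rw [frobNorm_smul, abs_of_pos (inv_pos.2 hρ1pos)]
      exact mul_le_mul_of_nonneg_left (hHmul _) (inv_pos.2 hρ1pos).le
    linarith
  -- the central estimate
  have hcentral : ρ1 * frobNorm (A - D (k + 1)) ≤
      (CF + CF ^ 4) * (1 + frobNorm (D (k + 1)) + frobNorm (V (k + 1)) / ρ0
        + frobNorm (V k) / ρ0) := by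
    have e1 : ρ1 • (A - D (k + 1)) = (ρ1 • P⁻¹) * Z := by
      rw [hAD, Matrix.smul_mul]
    have e2 : ρ1 * frobNorm (A - D (k + 1)) = frobNorm ((ρ1 • P⁻¹) * Z) := by
      rw [← e1, frobNorm_smul, abs_of_pos hρ1pos]
    rw [e2]
    have e3 : frobNorm ((ρ1 • P⁻¹) * Z) ≤ 1 * frobNorm Z := hQmul Z
    rw [one_mul] at e3
    have e4 := le_trans e3 hZbound
    -- final arithmetic
    set d := frobNorm (D (k + 1)) with hd
    set v1 := frobNorm (V (k + 1)) with hv1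
    set v0 := frobNorm (V k) with hv0
    set s := frobNorm (S (k + 1)) with hsv
    have hd0 : 0 ≤ d := frobNorm_nonneg _
    have hv10 : 0 ≤ v1 := frobNorm_nonneg _
    have hv00 : 0 ≤ v0 := frobNorm_nonneg _
    have hinv01 : ρ1⁻¹ ≤ ρ0⁻¹ := by
      apply inv_anti₀ hρ0pos hρ01
    have hCF4 : CF ≤ CF ^ 4 := le_self_pow₀ hCF (by norm_num)
    have hse : s ≤ d + ρ0⁻¹ * (v1 + v0) := hSbound
    have key : CF + CF * d + CF ^ 4 * (1 + s) + ρ1⁻¹ * (CF * v1)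
        ≤ (CF + CF ^ 4) * (1 + d + v1 / ρ0 + v0 / ρ0) := by
      rw [div_eq_inv_mul, div_eq_inv_mul]
      have hr0 : 0 ≤ ρ0⁻¹ := (inv_pos.2 hρ0pos).le
      have h1 : CF ^ 4 * s ≤ CF ^ 4 * (d + ρ0⁻¹ * (v1 + v0)) := by
        apply mul_le_mul_of_nonneg_left hse (by positivity)
      have h2 : ρ1⁻¹ * (CF * v1) ≤ ρ0⁻¹ * (CF * v1) := by
        apply mul_le_mul_of_nonneg_right hinv01 (by positivity)
      nlinarith [mul_nonneg hr0 hv10, mul_nonneg hr0 hv00, mul_nonneg hd0 hCF0]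
    exact le_trans e4 key
  -- relate to V (k+2) and D (k+2)
  have hDk2 : D (k + 2) = PS A := by rw [hD (k + 1), hA]
  have hDmem : D (k + 1) ∈ 𝒮 := by
    rw [hD k]; exact (hPS _).1
  have hproj : frobNorm (A - D (k + 2)) ≤ frobNorm (A - D (k + 1)) := by
    rw [hDk2]
    exact (hPS A).2 _ hDmem
  have hVk2 : V (k + 2) = ρ1 • (A - D (k + 2)) := by
    rw [hV (k + 1), hA, ← hρ1]
    simp only [show k + 1 + 1 = k + 2 from rfl, smul_sub, smul_add, smul_smul,
      mul_inv_cancel₀ hρ1ne, one_smul]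
    abel
  have hVnorm : frobNorm (V (k + 2)) = ρ1 * frobNorm (A - D (k + 2)) := by
    rw [hVk2, frobNorm_smul, abs_of_pos hρ1pos]
  constructor
  · rw [hVnorm]
    calc ρ1 * frobNorm (A - D (k + 2)) ≤ ρ1 * frobNorm (A - D (k + 1)) :=
          mul_le_mul_of_nonneg_left hproj hρ1pos.le
      _ ≤ _ := hcentral
  · have hDD : D (k + 2) - D (k + 1) = (A - D (k + 1)) - (A - D (k + 2)) := by abel
    have h1 : frobNorm (D (k + 2) - D (k + 1)) ≤ 2 * frobNorm (A - D (k + 1)) := by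
      rw [hDD]
      calc frobNorm ((A - D (k + 1)) - (A - D (k + 2)))
          ≤ frobNorm (A - D (k + 1)) + frobNorm (A - D (k + 2)) := frobNorm_sub_le _ _
        _ ≤ 2 * frobNorm (A - D (k + 1)) := by linarith [hproj]
    have h2 : frobNorm (A - D (k + 1)) ≤
        (CF + CF ^ 4) * (1 + frobNorm (D (k + 1)) + frobNorm (V (k + 1)) / ρ0
          + frobNorm (V k) / ρ0) / ρ1 := by
      rw [le_div_iff₀ hρ1pos]
      linarith [hcentral]
    calc frobNorm (D (k + 2) - D (k + 1)) ≤ 2 * frobNorm (A - D (k + 1)) := h1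
      _ ≤ 2 * ((CF + CF ^ 4) * (1 + frobNorm (D (k + 1)) + frobNorm (V (k + 1)) / ρ0
          + frobNorm (V k) / ρ0) / ρ1) := by linarith [h2]
      _ = (2 * CF + 2 * CF ^ 4) / ρ1 * (1 + frobNorm (D (k + 1)) + frobNorm (V (k + 1)) / ρ0
          + frobNorm (V k) / ρ0) := by
          field_simp
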